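/- There exists N such that for all n ≥ N, Σ_{m < 2n, m odd} (m/φ(m))² < 1.78·n. -/

import Mathlib

set_option maxRecDepth 4000

open Finset

namespace Aux10

noncomputable def w (p : ℕ) : ℝ := (2 * (p:ℝ) - 1) / ((p : ℝ) - 1) ^ 2

noncomputable def W (d : ℕ) : ℝ := ∏ p ∈ d.primeFactors, w p

lemma w_nonneg {p : ℕ} (hp : 2 ≤ p) : 0 ≤ w p := by
  have : (2:ℝ) ≤ p := by exact_mod_cast hp
  unfold w
  apply div_nonneg (by linarith) (by positivity)

lemma W_nonneg {d : ℕ} : 0 ≤ W d := by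
  unfold W
  apply Finset.prod_nonneg
  intro p hp
  exact w_nonneg (Nat.prime_of_mem_primeFactors hp).two_le

lemma ratio_eq {m : ℕ} (hm : m ≠ 0) :
    ((m : ℝ) / (Nat.totient m : ℝ)) = ∏ p ∈ m.primeFactors, ((p:ℝ) / ((p:ℝ) - 1)) := by
  have key := Nat.totient_mul_prod_primeFactors m
  have hφ : (Nat.totient m : ℝ) ≠ 0 := by
    exact_mod_cast (Nat.totient_pos.mpr (Nat.pos_of_ne_zero hm)).ne'
  have hP : ∀ p ∈ m.primeFactors, ((p:ℝ) - 1) ≠ 0 := by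
    intro p hp
    have h2 : 2 ≤ p := (Nat.prime_of_mem_primeFactors hp).two_le
    have : (2:ℝ) ≤ p := by exact_mod_cast h2
    linarith
  have keyR : (Nat.totient m : ℝ) * ∏ p ∈ m.primeFactors, (p:ℝ)
      = (m : ℝ) * ∏ p ∈ m.primeFactors, ((p:ℝ) - 1) := by
    have := congrArg (Nat.cast (R := ℝ)) key
    push_cast at this
    rw [this]
    apply congrArg
    apply Finset.prod_congr rfl
    intro p hp
    have h2 : 2 ≤ p := (Nat.prime_of_mem_primeFactors hp).two_le
    have : (1:ℕ) ≤ p := by omega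
    push_cast [Nat.cast_sub this]
    ring
  rw [Finset.prod_div_distrib]
  rw [div_eq_div_iff hφ (Finset.prod_ne_zero_iff.mpr hP)]
  linarith [keyR]

lemma one_add_w {p : ℕ} (hp : 2 ≤ p) : ((p:ℝ) / ((p:ℝ) - 1)) ^ 2 = 1 + w p := by
  have h2 : (2:ℝ) ≤ p := by exact_mod_cast hp
  have : ((p:ℝ) - 1) ≠ 0 := by linarith
  unfold w
  field_simp
  ring

lemma identity {m : ℕ} (hm : m ≠ 0) :
    ((m : ℝ) / (Nat.totient m : ℝ)) ^ 2
      = ∑ d ∈ m.divisors.filter Squarefree, W d := by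
  rw [ratio_eq hm, ← Finset.prod_pow]
  have h1 : ∏ p ∈ m.primeFactors, ((p:ℝ) / ((p:ℝ) - 1)) ^ 2
      = ∏ p ∈ m.primeFactors, (w p + 1) := by
    apply Finset.prod_congr rfl
    intro p hp
    rw [one_add_w (Nat.prime_of_mem_primeFactors hp).two_le]; ring
  rw [h1, Finset.prod_add]
  simp only [Finset.prod_const_one, mul_one]
  rw [Nat.sum_divisors_filter_squarefree hm]
  have hfac : (UniqueFactorizationMonoid.normalizedFactors m).toFinset = m.primeFactors := by
    rw [Nat.factors_eq]
    rfl
  rw [hfac]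
  apply Finset.sum_congr rfl
  intro t ht
  rw [Finset.mem_powerset] at ht
  have hprime : ∀ p ∈ t, p.Prime := fun p hp => Nat.prime_of_mem_primeFactors (ht hp)
  have : (t.val.prod) = ∏ p ∈ t, p := by
    rw [Finset.prod_eq_multiset_prod]; simp
  rw [this]
  unfold W
  rw [Nat.primeFactors_prod hprime]

/-! ### the explicit list of odd primes below 300 -/

def L300 : List ℕ := [3,5,7,11,13,17,19,23,29,31,37,41,43,47,53,59,61,67,71,73,79,83,89,97,101,103,107,109,113,127,131,137,139,149,151,157,163,167,173,179,181,191,193,197,199,211,223,227,229,233,239,241,251,257,263,269,271,277,281,283,293]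

lemma nodup_L300 : L300.Nodup := by decide

attribute [local instance] Nat.decidablePrime in
set_option maxRecDepth 100000 in
set_option maxHeartbeats 1000000 in
lemma mem_L300 : ∀ p, p < 300 → p.Prime → Odd p → p ∈ L300 := by decide

lemma two_le_L300 : ∀ p ∈ L300, 2 ≤ p := by decide

lemma prodE300 : ∏ p ∈ L300.toFinset, (1 + w p / p) ≤ 1.7707 := by
  rw [List.prod_toFinset _ nodup_L300]
  simp only [L300, List.map_cons, List.map_nil, List.prod_cons, List.prod_nil, w]
  norm_num

/-! ### counting odd multiples -/

lemma count_le (n d : ℕ) (hd : Odd d) :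
    (((range (2*n)).filter (fun m => Odd m)).filter (fun m => d ∣ m)).card ≤ n / d + 1 := by
  have hd0 : 0 < d := hd.pos
  have hcard : (((range (2*n)).filter (fun m => Odd m)).filter (fun m => d ∣ m)).card
      ≤ (range (n/d + 1)).card := by
    apply Finset.card_le_card_of_injOn (fun m => m / (2*d))
    · intro m hm
      simp only [Finset.mem_coe, Finset.mem_filter, Finset.mem_range] at hm
      obtain ⟨⟨hm2n, _⟩, _⟩ := hm
      rw [Finset.mem_coe, Finset.mem_range]
      beta_reduce
      have h1 : m / (2*d) ≤ (2*n) / (2*d) := Nat.div_le_div_right (le_of_lt hm2n)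
      have h2 : (2*n) / (2*d) = n / d := Nat.mul_div_mul_left n d (by norm_num)
      omega
    · intro m1 hm1 m2 hm2 heq
      simp only [Finset.mem_coe, Finset.mem_filter, Finset.mem_range] at hm1 hm2
      obtain ⟨⟨_, ho1⟩, hdvd1⟩ := hm1
      obtain ⟨⟨_, ho2⟩, hdvd2⟩ := hm2
      obtain ⟨k1, hk1⟩ := hdvd1
      obtain ⟨k2, hk2⟩ := hdvd2
      have hk1o : Odd k1 := by
        rcases Nat.even_or_odd k1 with he | ho
        · exfalso; rw [hk1] at ho1; exact (Nat.not_odd_iff_even.mpr (he.mul_left d)) ho1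
        · exact ho
      have hk2o : Odd k2 := by
        rcases Nat.even_or_odd k2 with he | ho
        · exfalso; rw [hk2] at ho2; exact (Nat.not_odd_iff_even.mpr (he.mul_left d)) ho2
        · exact ho
      simp only at heq
      rw [hk1, hk2] at heq ⊢
      have e1 : d * k1 / (2*d) = k1 / 2 := by
        rw [show 2*d = d*2 by ring, Nat.mul_div_mul_left _ _ hd0]
      have e2 : d * k2 / (2*d) = k2 / 2 := by
        rw [show 2*d = d*2 by ring, Nat.mul_div_mul_left _ _ hd0]
      rw [e1, e2] at heq
      obtain ⟨j1, hj1⟩ := hk1o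
      obtain ⟨j2, hj2⟩ := hk2o
      have hk : k1 = k2 := by omega
      rw [hk]
  simpa using hcard

/-! ### sum over squarefree odd numbers vs product over primes -/

lemma odd_of_dvd_odd {p d : ℕ} (hpd : p ∣ d) (hd : Odd d) : Odd p := by
  rcases Nat.even_or_odd p with he | ho
  · exfalso
    obtain ⟨c, hc⟩ := hpd
    rw [hc] at hd
    exact (Nat.not_odd_iff_even.mpr (he.mul_right c)) hd
  · exact ho

lemma sum_le_prod_primes (n : ℕ) (f : ℕ → ℝ) (hf : ∀ p, p.Prime → 0 ≤ f p) :
    ∑ d ∈ (range (2*n)).filter (fun d => Squarefree d ∧ Odd d), ∏ p ∈ d.primeFactors, f p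
      ≤ ∏ p ∈ (range (2*n)).filter (fun p => p.Prime ∧ Odd p), (1 + f p) := by
  have hprod : ∏ p ∈ (range (2*n)).filter (fun p => p.Prime ∧ Odd p), (1 + f p)
      = ∑ t ∈ ((range (2*n)).filter (fun p => p.Prime ∧ Odd p)).powerset, ∏ p ∈ t, f p := by
    have : ∀ p, (1 + f p) = (f p + 1) := fun p => by ring
    simp_rw [this]
    rw [Finset.prod_add]
    simp
  rw [hprod]
  have hinj : ∀ d1 ∈ (range (2*n)).filter (fun d => Squarefree d ∧ Odd d),
      ∀ d2 ∈ (range (2*n)).filter (fun d => Squarefree d ∧ Odd d),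
      d1.primeFactors = d2.primeFactors → d1 = d2 := by
    intro d1 h1 d2 h2 heq
    simp only [Finset.mem_filter] at h1 h2
    rw [← Nat.prod_primeFactors_of_squarefree h1.2.1, ← Nat.prod_primeFactors_of_squarefree h2.2.1,
      heq]
  rw [← Finset.sum_image (g := fun d : ℕ => d.primeFactors) (f := fun t : Finset ℕ => ∏ p ∈ t, f p) hinj]
  apply Finset.sum_le_sum_of_subset_of_nonneg
  · intro t ht
    rw [Finset.mem_image] at ht
    obtain ⟨d, hd, rfl⟩ := ht
    simp only [Finset.mem_filter, Finset.mem_range] at hd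
    obtain ⟨hdlt, hsq, hodd⟩ := hd
    rw [Finset.mem_powerset]
    intro p hp
    have hprime := Nat.prime_of_mem_primeFactors hp
    have hpdvd := Nat.dvd_of_mem_primeFactors hp
    simp only [Finset.mem_filter, Finset.mem_range]
    exact ⟨lt_of_le_of_lt (Nat.le_of_dvd hodd.pos hpdvd) hdlt, hprime, odd_of_dvd_odd hpdvd hodd⟩
  · intro t ht _
    rw [Finset.mem_powerset] at ht
    apply Finset.prod_nonneg
    intro p hp
    have := (Finset.mem_filter.mp (ht hp)).2.1
    exact hf p this

/-! ### product `(1+a) ≤ 1/(1 - sum a)` -/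

lemma prod_one_add_le (s : Finset ℕ) (a : ℕ → ℝ) (h0 : ∀ i ∈ s, 0 ≤ a i)
    (hs : ∑ i ∈ s, a i < 1) :
    ∏ i ∈ s, (1 + a i) ≤ 1 / (1 - ∑ i ∈ s, a i) := by
  induction s using Finset.cons_induction with
  | empty => simp
  | cons i s his ih =>
    rw [Finset.prod_cons, Finset.sum_cons]
    rw [Finset.sum_cons] at hs
    have hai : 0 ≤ a i := h0 i (Finset.mem_cons_self i s)
    have hsum0 : 0 ≤ ∑ j ∈ s, a j :=
      Finset.sum_nonneg fun j hj => h0 j (Finset.mem_cons_of_mem hj)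
    have hss : ∑ j ∈ s, a j < 1 := by linarith
    have ih' := ih (fun j hj => h0 j (Finset.mem_cons_of_mem hj)) hss
    have h1 : (0:ℝ) < 1 - ∑ j ∈ s, a j := by linarith
    have h2 : (0:ℝ) < 1 - (a i + ∑ j ∈ s, a j) := by linarith
    calc (1 + a i) * ∏ j ∈ s, (1 + a j) ≤ (1 + a i) * (1 / (1 - ∑ j ∈ s, a j)) := by
          apply mul_le_mul_of_nonneg_left ih' (by linarith)
      _ ≤ 1 / (1 - (a i + ∑ j ∈ s, a j)) := by
          rw [mul_one_div, div_le_div_iff₀ h1 h2]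
          nlinarith [mul_nonneg hai hsum0]

/-! ### telescoping -/

lemma tele_eq (a : ℕ) (ha : 1 ≤ a) : ∀ b, a ≤ b →
    ∑ j ∈ Finset.Ico a b, ((1:ℝ)/j - 1/(j+1)) = 1/a - 1/b := by
  intro b
  induction b with
  | zero => intro h; omega
  | succ b ih =>
    intro hab
    rcases Nat.lt_or_ge a (b+1) with h | h
    · have hab' : a ≤ b := by omega
      rw [Finset.sum_Ico_succ_top hab', ih hab']
      push_cast
      ring
    · have : a = b + 1 := by omega
      subst this
      simp

lemma tele_le (a b : ℕ) (ha : 1 ≤ a) :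
    ∑ j ∈ Finset.Ico a b, ((1:ℝ)/j - 1/(j+1)) ≤ 1/a := by
  rcases Nat.lt_or_ge b a with h | h
  · rw [Finset.Ico_eq_empty (by omega), Finset.sum_empty]
    positivity
  · rw [tele_eq a ha b h]
    have : (0:ℝ) ≤ 1/(b:ℝ) := by positivity
    linarith

/-! ### tail of the prime product -/

lemma tail_pointwise {p : ℕ} (hodd : Odd p) (hp : 300 ≤ p) :
    w p / p ≤ 0.505 * (1/((p/2 : ℕ):ℝ) - 1/(((p/2 : ℕ):ℝ)+1)) := by
  obtain ⟨j, hj⟩ := hodd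
  have hj2 : p / 2 = j := by omega
  have hj150 : 150 ≤ j := by omega
  have hjR : (150:ℝ) ≤ (j:ℝ) := by exact_mod_cast hj150
  rw [hj2]
  unfold w
  have hpR : (p:ℝ) = 2*(j:ℝ)+1 := by rw [hj]; push_cast; ring
  rw [hpR]
  have h1 : (0:ℝ) < j := by linarith
  have h2 : (0:ℝ) < 2*(j:ℝ)+1 := by linarith
  have e1 : 1/(j:ℝ) - 1/((j:ℝ)+1) = 1/((j:ℝ)*((j:ℝ)+1)) := by
    field_simp
    ring
  rw [e1, div_div, mul_one_div, div_le_div_iff₀ (by nlinarith) (by positivity)]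
  nlinarith [mul_nonneg (mul_nonneg (sub_nonneg.mpr hjR) h1.le) h1.le,
    mul_le_mul_of_nonneg_left hjR h1.le]

lemma tail_sum (n : ℕ) :
    ∑ p ∈ ((range (2*n)).filter (fun p => Nat.Prime p ∧ Odd p)).filter (fun p => ¬ p < 300),
      w p / p ≤ 0.505/150 := by
  set T := ((range (2*n)).filter (fun p => Nat.Prime p ∧ Odd p)).filter (fun p => ¬ p < 300)
    with hT
  have hmemT : ∀ p ∈ T, p < 2*n ∧ Nat.Prime p ∧ Odd p ∧ 300 ≤ p := by
    intro p hp
    simp only [hT, Finset.mem_filter, Finset.mem_range] at hp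
    exact ⟨hp.1.1, hp.1.2.1, hp.1.2.2, by omega⟩
  have step1 : ∑ p ∈ T, w p / p
      ≤ ∑ p ∈ T, 0.505 * (1/((p/2 : ℕ):ℝ) - 1/(((p/2 : ℕ):ℝ)+1)) := by
    apply Finset.sum_le_sum
    intro p hp
    obtain ⟨_, _, ho, h300⟩ := hmemT p hp
    exact tail_pointwise ho h300
  have hinj : ∀ p1 ∈ T, ∀ p2 ∈ T, p1 / 2 = p2 / 2 → p1 = p2 := by
    intro p1 h1 p2 h2 he
    obtain ⟨_, _, ho1, _⟩ := hmemT p1 h1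
    obtain ⟨_, _, ho2, _⟩ := hmemT p2 h2
    obtain ⟨a, ha⟩ := ho1
    obtain ⟨b, hb⟩ := ho2
    omega
  have step2 : ∑ p ∈ T, 0.505 * (1/((p/2 : ℕ):ℝ) - 1/(((p/2 : ℕ):ℝ)+1))
      = ∑ j ∈ T.image (fun p : ℕ => p / 2), 0.505 * (1/(j:ℝ) - 1/((j:ℝ)+1)) :=
    (Finset.sum_image (g := fun p : ℕ => p / 2)
      (f := fun j : ℕ => 0.505 * (1/(j:ℝ) - 1/((j:ℝ)+1))) hinj).symm
  have step3 : ∑ j ∈ T.image (fun p : ℕ => p / 2), 0.505 * (1/(j:ℝ) - 1/((j:ℝ)+1))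
      ≤ ∑ j ∈ Finset.Ico 150 n, 0.505 * (1/(j:ℝ) - 1/((j:ℝ)+1)) := by
    apply Finset.sum_le_sum_of_subset_of_nonneg
    · intro j hj
      rw [Finset.mem_image] at hj
      obtain ⟨p, hp, rfl⟩ := hj
      obtain ⟨hlt, _, _, h300⟩ := hmemT p hp
      rw [Finset.mem_Ico]
      omega
    · intro j hj _
      rw [Finset.mem_Ico] at hj
      have hj1 : (1:ℝ) ≤ (j:ℝ) := by exact_mod_cast Nat.one_le_iff_ne_zero.mpr (by omega)
      have : 1/((j:ℝ)+1) ≤ 1/(j:ℝ) := by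
        apply one_div_le_one_div_of_le (by linarith) (by linarith)
      nlinarith
  have step4 : ∑ j ∈ Finset.Ico 150 n, 0.505 * (1/(j:ℝ) - 1/((j:ℝ)+1)) ≤ 0.505/150 := by
    rw [← Finset.mul_sum]
    have := tele_le 150 n (by norm_num)
    calc (0.505:ℝ) * ∑ j ∈ Finset.Ico 150 n, (1/(j:ℝ) - 1/((j:ℝ)+1))
        ≤ 0.505 * (1/(150:ℕ)) := by
          apply mul_le_mul_of_nonneg_left _ (by norm_num)
          exact_mod_cast this
      _ = 0.505/150 := by norm_num
  linarith

lemma prod_subset_le {s t : Finset ℕ} (f : ℕ → ℝ) (h : s ⊆ t) (h0 : ∀ i ∈ t, 0 ≤ f i)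
    (h1 : ∀ i ∈ t, i ∉ s → 1 ≤ f i) : ∏ i ∈ s, f i ≤ ∏ i ∈ t, f i := by
  rw [← Finset.prod_sdiff h]
  have hs0 : 0 ≤ ∏ i ∈ s, f i := Finset.prod_nonneg fun i hi => h0 i (h hi)
  have h1' : (1:ℝ) ≤ ∏ i ∈ t \ s, f i := by
    have := Finset.prod_le_prod (s := t \ s) (f := fun _ => (1:ℝ)) (g := f)
      (fun i _ => zero_le_one) (fun i hi => h1 i (Finset.mem_sdiff.mp hi).1 (Finset.mem_sdiff.mp hi).2)
    simpa using this
  nlinarith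

lemma main_prod_bound (n : ℕ) :
    ∏ p ∈ (range (2*n)).filter (fun p => Nat.Prime p ∧ Odd p), (1 + w p / p) ≤ 1.7768 := by
  set P := (range (2*n)).filter (fun p => Nat.Prime p ∧ Odd p) with hP
  have hfact_nonneg : ∀ p ∈ P, (0:ℝ) ≤ 1 + w p / p := by
    intro p hp
    simp only [hP, Finset.mem_filter] at hp
    have h2 : 2 ≤ p := hp.2.1.two_le
    have : 0 ≤ w p / p := div_nonneg (w_nonneg h2) (by positivity)
    linarith
  rw [← Finset.prod_filter_mul_prod_filter_not P (fun p => p < 300)]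
  have hsmall : ∏ p ∈ P.filter (fun p => p < 300), (1 + w p / p) ≤ 1.7707 := by
    refine le_trans (prod_subset_le (fun p => 1 + w p / (p:ℝ)) ?_ ?_ ?_) prodE300
    · intro p hp
      simp only [hP, Finset.mem_filter, Finset.mem_range] at hp
      rw [List.mem_toFinset]
      exact mem_L300 p hp.2 hp.1.2.1 hp.1.2.2
    · intro p hp
      rw [List.mem_toFinset] at hp
      have h2 : 2 ≤ p := two_le_L300 p hp
      have : 0 ≤ w p / p := div_nonneg (w_nonneg h2) (by positivity)
      linarith
    · intro p hp _
      rw [List.mem_toFinset] at hp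
      have h2 : 2 ≤ p := two_le_L300 p hp
      have : 0 ≤ w p / p := div_nonneg (w_nonneg h2) (by positivity)
      linarith
  have htail : ∏ p ∈ P.filter (fun p => ¬ p < 300), (1 + w p / p) ≤ 1.00339 := by
    have hnn : ∀ p ∈ P.filter (fun p => ¬ p < 300), 0 ≤ w p / p := by
      intro p hp
      simp only [hP, Finset.mem_filter, Finset.mem_range] at hp
      have h2 : 2 ≤ p := hp.1.2.1.two_le
      exact div_nonneg (w_nonneg h2) (by positivity)
    have hsum : ∑ p ∈ P.filter (fun p => ¬ p < 300), w p / p ≤ 0.505/150 := tail_sum n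
    have hsum1 : ∑ p ∈ P.filter (fun p => ¬ p < 300), w p / p < 1 := by
      apply lt_of_le_of_lt hsum; norm_num
    calc ∏ p ∈ P.filter (fun p => ¬ p < 300), (1 + w p / p)
        ≤ 1 / (1 - ∑ p ∈ P.filter (fun p => ¬ p < 300), w p / p) :=
          prod_one_add_le _ _ hnn hsum1
      _ ≤ 1 / (1 - 0.505/150) := by
          apply one_div_le_one_div_of_le
          · norm_num
          · linarith
      _ ≤ 1.00339 := by norm_num
  have h1nn : (0:ℝ) ≤ ∏ p ∈ P.filter (fun p => ¬ p < 300), (1 + w p / p) :=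
    Finset.prod_nonneg fun p hp => hfact_nonneg p (Finset.mem_of_mem_filter p hp)
  calc (∏ p ∈ P.filter (fun p => p < 300), (1 + w p / p)) *
        ∏ p ∈ P.filter (fun p => ¬ p < 300), (1 + w p / p)
      ≤ 1.7707 * 1.00339 := by
        apply mul_le_mul hsmall htail h1nn (by norm_num)
    _ ≤ 1.7768 := by norm_num

/-! ### pointwise bound `W d ≤ 2.725/√d` -/

lemma sqrt_prod (s : Finset ℕ) :
    Real.sqrt (∏ p ∈ s, (p:ℝ)) = ∏ p ∈ s, Real.sqrt (p:ℝ) := by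
  induction s using Finset.cons_induction with
  | empty => simp
  | cons i s his ih =>
    rw [Finset.prod_cons, Finset.prod_cons, Real.sqrt_mul (by positivity), ih]

lemma w_sqrt_le {p : ℕ} (hp : p.Prime) (hodd : Odd p) (h3 : p ≠ 3) (h5 : p ≠ 5) :
    w p * Real.sqrt p ≤ 1 := by
  have h2 := hp.two_le
  obtain ⟨k, hk⟩ := hodd
  have h7 : 7 ≤ p := by omega
  have h7R : (7:ℝ) ≤ p := by exact_mod_cast h7
  have hpos : (0:ℝ) < 2*(p:ℝ)-1 := by linarith
  have hq : Real.sqrt p ≤ ((p:ℝ)-1)^2/(2*(p:ℝ)-1) := by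
    rw [show ((p:ℝ)-1)^2/(2*(p:ℝ)-1) = Real.sqrt ((((p:ℝ)-1)^2/(2*(p:ℝ)-1))^2) from
      (Real.sqrt_sq (by positivity)).symm]
    apply Real.sqrt_le_sqrt
    rw [div_pow, le_div_iff₀ (by positivity)]
    nlinarith [mul_nonneg (mul_nonneg (sub_nonneg.mpr h7R) (sub_nonneg.mpr h7R))
      (mul_nonneg (Nat.cast_nonneg p) (Nat.cast_nonneg p)),
      mul_nonneg (sub_nonneg.mpr h7R) (mul_nonneg (Nat.cast_nonneg p) (Nat.cast_nonneg p)),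
      sq_nonneg ((p:ℝ)-1), sq_nonneg ((p:ℝ)^2-4*(p:ℝ))]
  calc w p * Real.sqrt p ≤ w p * (((p:ℝ)-1)^2/(2*(p:ℝ)-1)) :=
        mul_le_mul_of_nonneg_left hq (w_nonneg h2)
    _ = 1 := by
        unfold w
        have hne1 : ((p:ℝ)-1)^2 ≠ 0 := ne_of_gt (by nlinarith)
        have hne2 : 2*(p:ℝ)-1 ≠ 0 := ne_of_gt hpos
        field_simp
        exact div_self (ne_of_gt (by linarith))

lemma sqrt3_le : Real.sqrt 3 ≤ 1.7328 := by
  rw [show (1.7328:ℝ) = Real.sqrt (1.7328^2) from (Real.sqrt_sq (by norm_num)).symm]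
  apply Real.sqrt_le_sqrt
  norm_num

lemma sqrt5_le : Real.sqrt 5 ≤ 2.2361 := by
  rw [show (2.2361:ℝ) = Real.sqrt (2.2361^2) from (Real.sqrt_sq (by norm_num)).symm]
  apply Real.sqrt_le_sqrt
  norm_num

lemma W_le {d : ℕ} (hsq : Squarefree d) (hodd : Odd d) : W d ≤ 2.725 / Real.sqrt d := by
  have hd0 : 0 < d := hodd.pos
  have hdR : (0:ℝ) < d := by exact_mod_cast hd0
  have hsqrt_pos : 0 < Real.sqrt d := Real.sqrt_pos.mpr hdR
  rw [le_div_iff₀ hsqrt_pos]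
  have hdprod : ((d:ℝ)) = ∏ p ∈ d.primeFactors, (p:ℝ) := by
    have := congrArg (Nat.cast (R := ℝ)) (Nat.prod_primeFactors_of_squarefree hsq)
    push_cast at this
    exact this.symm
  have hsqrt_eq : Real.sqrt d = ∏ p ∈ d.primeFactors, Real.sqrt p := by
    rw [hdprod, sqrt_prod]
  rw [hsqrt_eq]
  unfold W
  rw [← Finset.prod_mul_distrib]
  set g : ℕ → ℝ := fun p => if p = 3 then 2.166 else if p = 5 then 1.2579 else 1 with hg
  have hpt : ∀ p ∈ d.primeFactors, w p * Real.sqrt p ≤ g p := by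
    intro p hp
    have hprime := Nat.prime_of_mem_primeFactors hp
    have hpodd : Odd p := odd_of_dvd_odd (Nat.dvd_of_mem_primeFactors hp) hodd
    by_cases h3 : p = 3
    · subst h3
      have hg3 : g 3 = 2.166 := by simp [hg]
      have hw3 : w 3 = 5/4 := by unfold w; norm_num
      rw [hg3, hw3, show ((3:ℕ):ℝ) = (3:ℝ) by norm_num]
      linarith [sqrt3_le]
    · by_cases h5 : p = 5
      · subst h5
        have hg5 : g 5 = 1.2579 := by simp [hg]
        have hw5 : w 5 = 9/16 := by unfold w; norm_num
        rw [hg5, hw5, show ((5:ℕ):ℝ) = (5:ℝ) by norm_num]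
        linarith [sqrt5_le]
      · have hgp : g p = 1 := by simp [hg, h3, h5]
        rw [hgp]
        exact w_sqrt_le hprime hpodd h3 h5
  have hnn : ∀ p ∈ d.primeFactors, 0 ≤ w p * Real.sqrt p := by
    intro p hp
    exact mul_nonneg (w_nonneg (Nat.prime_of_mem_primeFactors hp).two_le) (Real.sqrt_nonneg _)
  calc ∏ p ∈ d.primeFactors, (w p * Real.sqrt p) ≤ ∏ p ∈ d.primeFactors, g p :=
        Finset.prod_le_prod hnn hpt
    _ = ∏ p ∈ d.primeFactors.filter (fun p => p = 3 ∨ p = 5), g p := by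
        apply (Finset.prod_subset (Finset.filter_subset _ _) _).symm
        intro x hx hnx
        simp only [Finset.mem_filter] at hnx
        have : ¬(x = 3 ∨ x = 5) := fun h => hnx ⟨hx, h⟩
        push_neg at this
        rw [hg]
        simp only [if_neg this.1, if_neg this.2]
    _ ≤ ∏ p ∈ ({3, 5} : Finset ℕ), g p := by
        apply prod_subset_le
        · intro x hx
          simp only [Finset.mem_filter] at hx
          simp only [Finset.mem_insert, Finset.mem_singleton]
          exact hx.2
        · intro x hx
          simp only [Finset.mem_insert, Finset.mem_singleton] at hx
          rcases hx with rfl | rfl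
          · rw [hg]; norm_num
          · rw [hg]; norm_num
        · intro x hx _
          simp only [Finset.mem_insert, Finset.mem_singleton] at hx
          rcases hx with rfl | rfl
          · rw [hg]; norm_num
          · rw [hg]; norm_num
    _ ≤ 2.725 := by
        rw [Finset.prod_insert (by norm_num), Finset.prod_singleton, hg]
        norm_num

/-! ### sum of 1/sqrt -/

noncomputable def hfun (d : ℕ) : ℝ := if d = 0 then 0 else 1 / Real.sqrt d

lemma hfun_nonneg (d : ℕ) : 0 ≤ hfun d := by
  unfold hfun
  split
  · exact le_refl 0
  · positivity

lemma sum_hfun_le : ∀ N : ℕ, ∑ d ∈ range (N+1), hfun d ≤ 2 * Real.sqrt N := by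
  intro N
  induction N with
  | zero => simp [hfun]
  | succ M ih =>
    rw [Finset.sum_range_succ]
    have hstep : hfun (M+1) ≤ 2*Real.sqrt ((M:ℝ)+1) - 2*Real.sqrt M := by
      unfold hfun
      rw [if_neg (by omega)]
      have hb : (0:ℝ) < Real.sqrt ((M+1:ℕ):ℝ) := Real.sqrt_pos.mpr (by push_cast; linarith)
      have hcast : ((M+1:ℕ):ℝ) = (M:ℝ)+1 := by push_cast; ring
      rw [hcast] at hb ⊢
      rw [div_le_iff₀ hb]
      have ha2 : Real.sqrt (M:ℝ) ^ 2 = (M:ℝ) := Real.sq_sqrt (Nat.cast_nonneg M)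
      have hb2 : Real.sqrt ((M:ℝ)+1) ^ 2 = (M:ℝ)+1 := Real.sq_sqrt (by positivity)
      have ha0 : 0 ≤ Real.sqrt (M:ℝ) := Real.sqrt_nonneg _
      nlinarith [sq_nonneg (2*Real.sqrt (M:ℝ)*Real.sqrt ((M:ℝ)+1) - (2*(M:ℝ)+1)),
        mul_nonneg ha0 hb.le]
    have hcast2 : ((M+1:ℕ):ℝ) = (M:ℝ)+1 := by push_cast; ring
    rw [hcast2]
    linarith

lemma sum_hfun_le' (N : ℕ) : ∑ d ∈ range N, hfun d ≤ 2 * Real.sqrt N := by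
  cases N with
  | zero => simp
  | succ M =>
    calc ∑ d ∈ range (M+1), hfun d ≤ 2 * Real.sqrt M := sum_hfun_le M
      _ ≤ 2 * Real.sqrt (M+1:ℕ) := by
          apply mul_le_mul_of_nonneg_left _ (by norm_num)
          apply Real.sqrt_le_sqrt
          push_cast
          linarith

lemma term_le (n : ℕ) (d : ℕ) :
    (((((range (2*n)).filter (fun m => Odd m)).filter
        (fun m => d ∣ m ∧ Squarefree d)).card : ℝ)) * W d
      ≤ if Squarefree d ∧ Odd d then W d * ((n:ℝ)/d + 1) else 0 := by
  set M := (range (2*n)).filter (fun m => Odd m) with hM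
  by_cases hsq : Squarefree d
  · by_cases hodd : Odd d
    · rw [if_pos ⟨hsq, hodd⟩]
      have hfe : M.filter (fun m => d ∣ m ∧ Squarefree d) = M.filter (fun m => d ∣ m) := by
        apply Finset.filter_congr
        intro m _
        simp [hsq]
      rw [hfe]
      have hcount := count_le n d hodd
      have hcast : ((M.filter (fun m => d ∣ m)).card : ℝ) ≤ (n:ℝ)/d + 1 := by
        calc ((M.filter (fun m => d ∣ m)).card : ℝ) ≤ ((n/d + 1 : ℕ) : ℝ) := by
              exact_mod_cast hcount
          _ ≤ (n:ℝ)/d + 1 := by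
              push_cast
              have := Nat.cast_div_le (α := ℝ) (m := n) (n := d)
              linarith
      rw [mul_comm]
      exact mul_le_mul_of_nonneg_left hcast W_nonneg
    · rw [if_neg (fun h => hodd h.2)]
      have he : M.filter (fun m => d ∣ m ∧ Squarefree d) = ∅ := by
        rw [Finset.eq_empty_iff_forall_notMem]
        intro m hm
        rw [Finset.mem_filter, hM, Finset.mem_filter] at hm
        exact hodd (odd_of_dvd_odd hm.2.1 hm.1.2)
      rw [he]
      simp
  · rw [if_neg (fun h => hsq h.1)]
    have he : M.filter (fun m => d ∣ m ∧ Squarefree d) = ∅ := by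
      rw [Finset.eq_empty_iff_forall_notMem]
      intro m hm
      rw [Finset.mem_filter] at hm
      exact hsq hm.2.2
    rw [he]
    simp

end Aux10

open Finset Aux10 in
theorem stmt_10 :
    ∃ N : ℕ, ∀ n : ℕ, N ≤ n →
      ∑ m ∈ (Finset.range (2 * n)).filter (fun m => Odd m),
        ((m : ℝ) / (Nat.totient m : ℝ)) ^ 2 < 1.78 * n := by
  use 100000000
  intro n hn
  have hnR : (100000000:ℝ) ≤ (n:ℝ) := by exact_mod_cast hn
  set M := (range (2*n)).filter (fun m => Odd m) with hM
  set D := (range (2*n)).filter (fun d => Squarefree d ∧ Odd d) with hD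
  -- Step 1: expand each term as a sum over squarefree divisors
  have step1 : ∑ m ∈ M, ((m : ℝ) / (Nat.totient m : ℝ)) ^ 2
      = ∑ m ∈ M, ∑ d ∈ range (2*n), (if d ∣ m ∧ Squarefree d then W d else 0) := by
    apply Finset.sum_congr rfl
    intro m hm
    rw [hM, Finset.mem_filter, Finset.mem_range] at hm
    have hm0 : m ≠ 0 := by
      rintro rfl
      have := Nat.odd_iff.mp hm.2
      omega
    rw [identity hm0]
    have hset : m.divisors.filter Squarefree
        = (range (2*n)).filter (fun d => d ∣ m ∧ Squarefree d) := by
      ext d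
      simp only [Finset.mem_filter, Nat.mem_divisors, Finset.mem_range]
      constructor
      · rintro ⟨⟨hdvd, _⟩, hsq⟩
        exact ⟨lt_of_le_of_lt (Nat.le_of_dvd (Nat.pos_of_ne_zero hm0) hdvd) hm.1, hdvd, hsq⟩
      · rintro ⟨_, hdvd, hsq⟩
        exact ⟨⟨hdvd, hm0⟩, hsq⟩
    rw [hset, Finset.sum_filter]
  rw [step1, Finset.sum_comm]
  -- Step 2: inner sums are counts
  have step2 : ∀ d ∈ range (2*n),
      ∑ m ∈ M, (if d ∣ m ∧ Squarefree d then W d else 0)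
      = ((M.filter (fun m => d ∣ m ∧ Squarefree d)).card : ℝ) * W d := by
    intro d _
    rw [← Finset.sum_filter, Finset.sum_const, nsmul_eq_mul]
  rw [Finset.sum_congr rfl step2]
  -- Step 3: termwise bound
  have step3 : ∑ d ∈ range (2*n), ((M.filter (fun m => d ∣ m ∧ Squarefree d)).card : ℝ) * W d
      ≤ ∑ d ∈ range (2*n), (if Squarefree d ∧ Odd d then W d * ((n:ℝ)/d + 1) else 0) :=
    Finset.sum_le_sum (fun d _ => term_le n d)
  have step4 : ∑ d ∈ range (2*n), (if Squarefree d ∧ Odd d then W d * ((n:ℝ)/d + 1) else 0)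
      = ∑ d ∈ D, W d * ((n:ℝ)/d + 1) := by
    rw [hD, Finset.sum_filter]
  -- split main and error
  have split : ∑ d ∈ D, W d * ((n:ℝ)/d + 1)
      = (n:ℝ) * (∑ d ∈ D, W d / d) + ∑ d ∈ D, W d := by
    rw [Finset.mul_sum, ← Finset.sum_add_distrib]
    apply Finset.sum_congr rfl
    intro d _
    ring
  -- main term
  have hmemD : ∀ d ∈ D, Squarefree d ∧ Odd d := by
    intro d hd
    rw [hD, Finset.mem_filter] at hd
    exact hd.2
  have main1 : ∑ d ∈ D, W d / d = ∑ d ∈ D, ∏ p ∈ d.primeFactors, (w p / p) := by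
    apply Finset.sum_congr rfl
    intro d hd
    obtain ⟨hsq, _⟩ := hmemD d hd
    have hdprod : ((d:ℝ)) = ∏ p ∈ d.primeFactors, (p:ℝ) := by
      have := congrArg (Nat.cast (R := ℝ)) (Nat.prod_primeFactors_of_squarefree hsq)
      push_cast at this
      exact this.symm
    rw [W, hdprod, ← Finset.prod_div_distrib]
  have main2 : ∑ d ∈ D, ∏ p ∈ d.primeFactors, (w p / p) ≤ 1.7768 := by
    refine le_trans (sum_le_prod_primes n (fun p => w p / p) ?_) (main_prod_bound n)
    intro p hp
    exact div_nonneg (w_nonneg hp.two_le) (by positivity)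
  -- error term
  have err1 : ∑ d ∈ D, W d ≤ ∑ d ∈ range (2*n), 2.725 * hfun d := by
    have hpt : ∀ d ∈ D, W d ≤ 2.725 * hfun d := by
      intro d hd
      obtain ⟨hsq, hodd⟩ := hmemD d hd
      have hd0 : d ≠ 0 := hodd.pos.ne'
      rw [hfun, if_neg hd0]
      rw [mul_one_div]
      exact W_le hsq hodd
    calc ∑ d ∈ D, W d ≤ ∑ d ∈ D, 2.725 * hfun d := Finset.sum_le_sum hpt
      _ ≤ ∑ d ∈ range (2*n), 2.725 * hfun d := by
          apply Finset.sum_le_sum_of_subset_of_nonneg (Finset.filter_subset _ _)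
          intro d _ _
          exact mul_nonneg (by norm_num) (hfun_nonneg d)
  have err2 : ∑ d ∈ range (2*n), 2.725 * hfun d ≤ 2.725 * (2 * Real.sqrt (2*n:ℕ)) := by
    rw [← Finset.mul_sum]
    exact mul_le_mul_of_nonneg_left (sum_hfun_le' (2*n)) (by norm_num)
  -- numeric estimates for sqrt
  have hsq2n : Real.sqrt ((2*n:ℕ):ℝ) ≤ 1.4143 * ((n:ℝ)/10000) := by
    have hc : ((2*n:ℕ):ℝ) = 2 * (n:ℝ) := by push_cast; ring
    rw [hc, show (2:ℝ)*(n:ℝ) = 2*(n:ℝ) from rfl, Real.sqrt_mul (by norm_num) (n:ℝ)]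
    have h2 : Real.sqrt 2 ≤ 1.4143 := by
      rw [show (1.4143:ℝ) = Real.sqrt (1.4143^2) from (Real.sqrt_sq (by norm_num)).symm]
      apply Real.sqrt_le_sqrt
      norm_num
    have hs : Real.sqrt (n:ℝ) ≤ (n:ℝ)/10000 := by
      have h1 : Real.sqrt (n:ℝ) ≤ Real.sqrt (((n:ℝ)/10000)^2) := by
        apply Real.sqrt_le_sqrt
        nlinarith
      rwa [Real.sqrt_sq (by positivity)] at h1
    exact mul_le_mul h2 hs (Real.sqrt_nonneg _) (by norm_num)
  -- put everything together
  have htotal : ∑ d ∈ range (2*n), ((M.filter (fun m => d ∣ m ∧ Squarefree d)).card : ℝ) * W d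
      ≤ (n:ℝ) * 1.7768 + 2.725 * (2 * (1.4143 * ((n:ℝ)/10000))) := by
    have hmain : (n:ℝ) * (∑ d ∈ D, W d / d) ≤ (n:ℝ) * 1.7768 := by
      apply mul_le_mul_of_nonneg_left _ (by positivity)
      rw [main1]; exact main2
    have herr : ∑ d ∈ D, W d ≤ 2.725 * (2 * (1.4143 * ((n:ℝ)/10000))) := by
      refine le_trans (le_trans err1 err2) ?_
      have := hsq2n
      nlinarith [Real.sqrt_nonneg ((2*n:ℕ):ℝ)]
    calc ∑ d ∈ range (2*n), ((M.filter (fun m => d ∣ m ∧ Squarefree d)).card : ℝ) * W d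
        ≤ ∑ d ∈ D, W d * ((n:ℝ)/d + 1) := by rw [← step4]; exact step3
      _ = (n:ℝ) * (∑ d ∈ D, W d / d) + ∑ d ∈ D, W d := split
      _ ≤ (n:ℝ) * 1.7768 + 2.725 * (2 * (1.4143 * ((n:ℝ)/10000))) := by linarith
  calc ∑ d ∈ range (2*n), ((M.filter (fun m => d ∣ m ∧ Squarefree d)).card : ℝ) * W d
      ≤ (n:ℝ) * 1.7768 + 2.725 * (2 * (1.4143 * ((n:ℝ)/10000))) := htotal
    _ < 1.78 * n := by nlinarith
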